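/- The function t ↦ log Φ(t) satisfies log Φ(t) / (t²/2) → -1 as t → -∞; equivalently, |log Φ(t)| = O(t²) as t → -∞. -/

import Mathlib

noncomputable def phi (t : ℝ) : ℝ := (Real.sqrt (2 * Real.pi))⁻¹ * Real.exp (-t ^ 2 / 2)

noncomputable def Phi (t : ℝ) : ℝ := ∫ u in Set.Iic t, phi u

noncomputable def millsR (t : ℝ) : ℝ := phi t / Phi t

open Filter

open MeasureTheory Set Real

lemma phi_pos (t : ℝ) : 0 < phi t := by
  have h : 0 < Real.sqrt (2 * Real.pi) := Real.sqrt_pos.2 (by positivity)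
  exact mul_pos (inv_pos.2 h) (Real.exp_pos _)

lemma integrable_phi : Integrable phi := by
  have h := (integrable_exp_neg_mul_sq (by norm_num : (0:ℝ) < 1/2)).const_mul
    (Real.sqrt (2 * Real.pi))⁻¹
  refine h.congr (ae_of_all _ fun t => ?_)
  unfold phi; ring_nf

lemma Phi_lower (t : ℝ) (ht : t ≤ 0) : phi (t - 1) ≤ Phi t := by
  have h1 : ∫ u in Ioc (t-1) t, phi u ≤ Phi t := by
    refine setIntegral_mono_set integrable_phi.integrableOn
      (ae_of_all _ fun u => (phi_pos u).le) (HasSubset.Subset.eventuallyLE Ioc_subset_Iic_self)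
  refine le_trans ?_ h1
  have h2 : ∫ _u in Ioc (t-1) t, phi (t-1) ≤ ∫ u in Ioc (t-1) t, phi u := by
    refine setIntegral_mono_on (integrableOn_const ?_)
      integrable_phi.integrableOn measurableSet_Ioc ?_
    · rw [Real.volume_Ioc]; exact ENNReal.ofReal_ne_top
    · intro u hu
      have hu1 : t - 1 < u := hu.1
      have hu2 : u ≤ t := hu.2
      have hsq : u ^ 2 ≤ (t - 1) ^ 2 := by nlinarith
      unfold phi
      exact mul_le_mul_of_nonneg_left (Real.exp_le_exp.2 (by linarith))
        (inv_nonneg.2 (Real.sqrt_nonneg _))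
  refine le_trans (le_of_eq ?_) h2
  rw [setIntegral_const, Real.volume_real_Ioc]
  rw [show t - (t - 1) = 1 by ring]
  simp

lemma integrableOn_exp_mul_Iic' {c : ℝ} (hc : 0 < c) (t : ℝ) :
    IntegrableOn (fun u => Real.exp (c * u)) (Iic t) := by
  rw [← integrable_indicator_iff measurableSet_Iic]
  have h : Integrable ((Iic (c * t)).indicator Real.exp) :=
    (integrable_indicator_iff measurableSet_Iic).2 (integrableOn_exp_Iic _)
  have h2 := h.comp_mul_left' hc.ne'
  refine h2.congr (ae_of_all _ fun x => ?_)
  simp only [Set.indicator_apply, mem_Iic]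
  simp only [mul_le_mul_iff_right₀ hc]

lemma integral_exp_mul_Iic' {c : ℝ} (hc : 0 < c) (t : ℝ) :
    ∫ u in Iic t, Real.exp (c * u) = Real.exp (c * t) / c := by
  have hderiv : ∀ x ∈ Iic t, HasDerivAt (fun u => Real.exp (c * u) / c) (Real.exp (c * x)) x := by
    intro x _
    have h1 : HasDerivAt (fun u : ℝ => c * u) c x := by
      simpa using (hasDerivAt_id x).const_mul c
    have h2 := (h1.exp).div_const c
    rwa [mul_div_cancel_right₀ _ hc.ne'] at h2
  have hlim : Tendsto (fun u => Real.exp (c * u) / c) atBot (nhds 0) := by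
    have : Tendsto (fun u : ℝ => c * u) atBot atBot :=
      (tendsto_const_mul_atBot_of_pos hc).2 tendsto_id
    have := (Real.tendsto_exp_atBot.comp this).div_const c
    simpa using this
  have := integral_Iic_of_hasDerivAt_of_tendsto' hderiv (integrableOn_exp_mul_Iic' hc t) hlim
  rw [this]; ring

lemma Phi_upper (t : ℝ) (ht : t < 0) : Phi t ≤ phi t / (-t) := by
  set c : ℝ := -t with hc
  have hcpos : 0 < c := by linarith
  have hbound : ∀ u ∈ Iic t, phi u ≤ (phi t * Real.exp (-(c * t))) * Real.exp (c * u) := by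
    intro u hu
    have hu' : u ≤ t := hu
    unfold phi
    rw [mul_assoc, mul_assoc, ← Real.exp_add, ← Real.exp_add]
    refine mul_le_mul_of_nonneg_left (Real.exp_le_exp.2 ?_) (inv_nonneg.2 (Real.sqrt_nonneg _))
    simp only [hc]; nlinarith [sq_nonneg (t - u), mul_nonneg (sub_nonneg.2 hu') (neg_nonneg.2 ht.le)]
  have hint : IntegrableOn (fun u => (phi t * Real.exp (-(c * t))) * Real.exp (c * u)) (Iic t) :=
    (integrableOn_exp_mul_Iic' hcpos t).const_mul _
  have h1 : Phi t ≤ ∫ u in Iic t, (phi t * Real.exp (-(c * t))) * Real.exp (c * u) := by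
    refine setIntegral_mono_on integrable_phi.integrableOn hint measurableSet_Iic hbound
  calc Phi t ≤ ∫ u in Iic t, (phi t * Real.exp (-(c * t))) * Real.exp (c * u) := h1
    _ = (phi t * Real.exp (-(c * t))) * (Real.exp (c * t) / c) := by
        rw [integral_const_mul, integral_exp_mul_Iic' hcpos]
    _ = phi t / c := by
        have h : Real.exp (-(c * t)) * (Real.exp (c * t) / c) = 1 / c := by
          rw [← mul_div_assoc, ← Real.exp_add]; simp
        rw [mul_assoc, h]; ring

lemma tendsto_log_neg_div_sq_atBot :
    Tendsto (fun t : ℝ => Real.log (-t) / t ^ 2) atBot (nhds 0) := by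
  have h1 : Tendsto (fun x : ℝ => Real.log x / x * x⁻¹) atTop (nhds 0) := by
    have := (Real.isLittleO_log_id_atTop.tendsto_div_nhds_zero).mul tendsto_inv_atTop_zero
    simpa using this
  have h2 := h1.comp tendsto_neg_atBot_atTop
  refine h2.congr fun t => ?_
  simp only [Function.comp_apply, id]
  rw [div_eq_mul_inv, mul_assoc, ← mul_inv, neg_mul_neg, ← sq, ← div_eq_mul_inv]

lemma tendsto_inv_atBot_zero' : Tendsto (fun t : ℝ => t⁻¹) atBot (nhds 0) := by
  have h0 : Tendsto (fun t : ℝ => (-t)⁻¹) atBot (nhds 0) :=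
    (tendsto_inv_atTop_zero (𝕜 := ℝ)).comp tendsto_neg_atBot_atTop
  have h := h0.neg
  rw [neg_zero] at h
  exact h.congr fun t => by rw [inv_neg, neg_neg]

/-- `log Φ(t) / (t²/2) → -1` as `t → -∞`; in particular `|log Φ(t)| = O(t²)` at `-∞`. -/
theorem logPhi_asymptotics_atBot :
    Tendsto (fun t : ℝ => Real.log (Phi t) / (t ^ 2 / 2)) atBot (nhds (-1)) ∧
      (fun t : ℝ => |Real.log (Phi t)|) =O[atBot] (fun t : ℝ => t ^ 2) := by
  set K := Real.log (Real.sqrt (2 * Real.pi)) with hK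
  have hlogphi : ∀ s : ℝ, Real.log (phi s) = -K - s ^ 2 / 2 := by
    intro s
    unfold phi
    rw [Real.log_mul (by positivity) (Real.exp_ne_zero _), Real.log_inv, Real.log_exp]
    ring
  have hinv2 : Tendsto (fun t : ℝ => (t ^ 2)⁻¹) atBot (nhds 0) := by
    have := tendsto_inv_atBot_zero'.mul tendsto_inv_atBot_zero'
    simpa [← mul_inv, ← sq] using this
  -- lower bound function tendsto
  have hf1 : Tendsto (fun t : ℝ => Real.log (phi (t - 1)) / (t ^ 2 / 2)) atBot (nhds (-1)) := by
    have haux : Tendsto (fun t : ℝ => (-2 * K) * (t ^ 2)⁻¹ - (1 - t⁻¹) ^ 2) atBot (nhds (-1)) := by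
      have hone : Tendsto (fun _ : ℝ => (1:ℝ)) atBot (nhds 1) := tendsto_const_nhds
      have h := (hinv2.const_mul (-2 * K)).sub ((hone.sub tendsto_inv_atBot_zero').pow 2)
      simpa using h
    refine haux.congr' ?_
    filter_upwards [eventually_le_atBot (-1 : ℝ)] with t ht
    have ht0 : t ≠ 0 := by intro h; rw [h] at ht; norm_num at ht
    rw [hlogphi]
    field_simp
  -- upper bound function tendsto
  have hf2 : Tendsto (fun t : ℝ => Real.log (phi t / (-t)) / (t ^ 2 / 2)) atBot (nhds (-1)) := by
    have haux : Tendsto (fun t : ℝ => (-2 * K) * (t ^ 2)⁻¹ - 1 - 2 * (Real.log (-t) / t ^ 2))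
        atBot (nhds (-1)) := by
      have hone : Tendsto (fun _ : ℝ => (1:ℝ)) atBot (nhds 1) := tendsto_const_nhds
      have h := ((hinv2.const_mul (-2 * K)).sub hone).sub
        (tendsto_log_neg_div_sq_atBot.const_mul 2)
      simpa using h
    refine haux.congr' ?_
    filter_upwards [eventually_le_atBot (-1 : ℝ)] with t ht
    have ht0 : t ≠ 0 := by intro h; rw [h] at ht; norm_num at ht
    have htneg : (0:ℝ) < -t := by linarith
    rw [Real.log_div (ne_of_gt (phi_pos t)) (ne_of_gt htneg), hlogphi]
    field_simp
  have key : Tendsto (fun t : ℝ => Real.log (Phi t) / (t ^ 2 / 2)) atBot (nhds (-1)) := by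
    refine tendsto_of_tendsto_of_tendsto_of_le_of_le' hf1 hf2 ?_ ?_
    · filter_upwards [eventually_le_atBot (-1 : ℝ)] with t ht
      have ht0 : t ≠ 0 := by intro h; rw [h] at ht; norm_num at ht
      have hp : (0:ℝ) < t ^ 2 / 2 := by positivity
      have hlow := Phi_lower t (by linarith)
      have hPpos : 0 < Phi t := lt_of_lt_of_le (phi_pos _) hlow
      have hle : Real.log (phi (t - 1)) ≤ Real.log (Phi t) :=
        (Real.log_le_log_iff (phi_pos _) hPpos).2 hlow
      gcongr
    · filter_upwards [eventually_le_atBot (-1 : ℝ)] with t ht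
      have ht0 : t ≠ 0 := by intro h; rw [h] at ht; norm_num at ht
      have hp : (0:ℝ) < t ^ 2 / 2 := by positivity
      have htlt : t < 0 := by linarith
      have hPpos : 0 < Phi t := lt_of_lt_of_le (phi_pos _) (Phi_lower t (by linarith))
      have hup := Phi_upper t htlt
      have hposdiv : 0 < phi t / (-t) := div_pos (phi_pos t) (by linarith)
      have hle : Real.log (Phi t) ≤ Real.log (phi t / (-t)) :=
        (Real.log_le_log_iff hPpos hposdiv).2 hup
      gcongr
  refine ⟨key, ?_⟩
  have h0 : (fun t : ℝ => Real.log (Phi t)) =O[atBot] (fun t : ℝ => t ^ 2 / 2) := by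
    refine Asymptotics.isBigO_of_div_tendsto_nhds ?_ (-1) key
    filter_upwards [eventually_le_atBot (-1 : ℝ)] with t ht h
    exfalso
    have ht0 : t ≠ 0 := by intro h'; rw [h'] at ht; norm_num at ht
    have : (0:ℝ) < t ^ 2 / 2 := by positivity
    linarith [h]
  have h1 : (fun t : ℝ => t ^ 2 / 2) =O[atBot] (fun t : ℝ => t ^ 2) := by
    refine Asymptotics.isBigO_of_le _ fun t => ?_
    rw [Real.norm_eq_abs, Real.norm_eq_abs, abs_of_nonneg (by positivity),
      abs_of_nonneg (by positivity)]
    nlinarith [sq_nonneg t]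
  have h2 := (h0.trans h1).norm_left
  simpa [Real.norm_eq_abs] using h2
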